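/- Let G be a cubic edge-colorful graph with n vertices and let X = L(G). Then the following statements are equivalent: (i) G is edge-reflexive; (ii) B(X) has exactly n distinct 3-colorings; (iii) for every 3-coloring {A, B, C} of B(X) there is a vertex of G with incident edges e, f, g such that {A, B, C} = {φ_X(e), φ_X(f), φ_X(g)}. -/

import Mathlib

open SimpleGraph

/-- A `k`-coloring of a graph `X`: a partition of the vertex set into `k`
(possibly empty) independent sets, the color classes of the coloring. -/
def IsColoring {V : Type*} (k : ℕ) (X : SimpleGraph V) (c : Fin k → Set V) : Prop :=
  (∀ v : V, ∃! i : Fin k, v ∈ c i) ∧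
  ∀ i : Fin k, ∀ u ∈ c i, ∀ w ∈ c i, ¬ X.Adj u w

/-- `S` occurs as a color class in some `k`-coloring of `X`. -/
def IsColorClass {V : Type*} (k : ℕ) (X : SimpleGraph V) (S : Set V) : Prop :=
  ∃ c : Fin k → Set V, IsColoring k X c ∧ ∃ i, c i = S

/-- The `k`-coloring complex `B(X)`: vertices are the color classes of
`k`-colorings of `X`, two of them adjacent if they occur together in some
`k`-coloring of `X`. -/
def ColoringComplex {V : Type*} (k : ℕ) (X : SimpleGraph V) :
    SimpleGraph {S : Set V // IsColorClass k X S} where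
  Adj C D := C ≠ D ∧ ∃ c : Fin k → Set V,
    IsColoring k X c ∧ (∃ i, c i = C.1) ∧ (∃ j, c j = D.1)
  symm := ⟨by
    rintro C D ⟨hne, c, hc, hi, hj⟩
    exact ⟨hne.symm, c, hc, hj, hi⟩⟩
  loopless := ⟨by rintro C ⟨hne, -⟩; exact hne rfl⟩

/-- The canonical map `φ_X`, sending a vertex `v` to the set of all color
classes containing `v`. -/
def phi {V : Type*} (k : ℕ) (X : SimpleGraph V) (v : V) :
    Set {S : Set V // IsColorClass k X S} :=
  {C | v ∈ C.1}

/-- `X` is reflexive for `k`-colorings: the canonical map `φ_X` is a graph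
isomorphism from `X` onto `B²(X) = B(B(X))`. -/
def IsReflexive {V : Type*} (k : ℕ) (X : SimpleGraph V) : Prop :=
  ∃ f : X ≃g ColoringComplex k (ColoringComplex k X),
    ∀ v : V, (f v : {T // IsColorClass k (ColoringComplex k X) T}).1 = phi k X v

/-- `X` is colorful for `k`-colorings: any two distinct vertices lie in
different color classes of some `k`-coloring of `X`. -/
def Colorful {V : Type*} (k : ℕ) (X : SimpleGraph V) : Prop :=
  ∀ x y : V, x ≠ y → ∃ c : Fin k → Set V, IsColoring k X c ∧
    ∃ i j : Fin k, i ≠ j ∧ x ∈ c i ∧ y ∈ c j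

/-- A cubic graph, possibly with half-edges (edges incident with a single
vertex, recorded as edges whose set of ends is a singleton), without parallel
edges: every vertex is incident with exactly three edges. -/
structure CubicGraph (V E : Type*) [DecidableEq V] where
  ends : E → Finset V
  ends_card : ∀ e, (ends e).card = 1 ∨ (ends e).card = 2
  no_parallel : ∀ e f, (ends e).card = 2 → ends e = ends f → e = f
  cubic : ∀ v : V, ∃ a b c : E, a ≠ b ∧ a ≠ c ∧ b ≠ c ∧
    ∀ f : E, v ∈ ends f ↔ f = a ∨ f = b ∨ f = c

/-- The line graph of a cubic graph: its vertices are the edges of `G`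
(including half-edges), two of them adjacent when they share an endpoint. -/
def lineGraph {V E : Type*} [DecidableEq V] (G : CubicGraph V E) : SimpleGraph E where
  Adj e f := e ≠ f ∧ (G.ends e ∩ G.ends f).Nonempty
  symm := ⟨by rintro e f ⟨hne, hint⟩; exact ⟨hne.symm, by rwa [Finset.inter_comm]⟩⟩
  loopless := ⟨by rintro e ⟨hne, -⟩; exact hne rfl⟩

/-- A cubic graph is edge-reflexive if its line graph is reflexive for
3-colorings. -/
def EdgeReflexive {V E : Type*} [DecidableEq V] (G : CubicGraph V E) : Prop :=
  IsReflexive 3 (lineGraph G)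

/-- A cubic graph is edge-colorful if its line graph is colorful for
3-colorings. -/
def EdgeColorful {V E : Type*} [DecidableEq V] (G : CubicGraph V E) : Prop :=
  Colorful 3 (lineGraph G)

/-- The underlying simple graph of a cubic graph: two vertices are adjacent
when some (full) edge joins them. -/
def underlying {V E : Type*} [DecidableEq V] (G : CubicGraph V E) : SimpleGraph V where
  Adj u w := u ≠ w ∧ ∃ e, G.ends e = {u, w}
  symm := ⟨by rintro u w ⟨hne, e, he⟩; exact ⟨hne.symm, e, by rwa [Finset.pair_comm]⟩⟩
  loopless := ⟨by rintro u ⟨hne, -⟩; exact hne rfl⟩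

/-- The number of 3-colorings of a graph `Y`, where a 3-coloring is identified
with its (unordered) set of color classes. -/
noncomputable def numColorings {W : Type*} (Y : SimpleGraph W) : ℕ :=
  Nat.card {P : Set (Set W) // ∃ c : Fin 3 → Set W, IsColoring 3 Y c ∧ P = Set.range c}

section EdgeReflexiveProof

variable {V E : Type*} [DecidableEq V] (G : CubicGraph V E)

private lemma fin3_cover {p q r : Fin 3} (hpq : p ≠ q) (hpr : p ≠ r) (hqr : q ≠ r)
    (k : Fin 3) : k = p ∨ k = q ∨ k = r := by
  by_contra hcon
  push_neg at hcon
  obtain ⟨h1, h2, h3⟩ := hcon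
  have := p.isLt; have := q.isLt; have := r.isLt; have := k.isLt
  simp only [ne_eq, Fin.ext_iff] at *
  omega

private lemma fin3_eq {i j k0 k1 : Fin 3} (hij : i ≠ j) (h0i : k0 ≠ i) (h0j : k0 ≠ j)
    (h1i : k1 ≠ i) (h1j : k1 ≠ j) : k0 = k1 := by
  have := i.isLt; have := j.isLt; have := k0.isLt; have := k1.isLt
  simp only [ne_eq, Fin.ext_iff] at *
  omega

private lemma third_exists {α : Type*} {p q r x y : α} (hpq : p ≠ q) (hpr : p ≠ r)
    (hqr : q ≠ r) (hx : x = p ∨ x = q ∨ x = r) (hy : y = p ∨ y = q ∨ y = r) (hxy : x ≠ y) :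
    ∃ z, (z = p ∨ z = q ∨ z = r) ∧ z ≠ x ∧ z ≠ y := by
  rcases hx with rfl | rfl | rfl <;> rcases hy with rfl | rfl | rfl <;>
    first
      | exact absurd rfl hxy
      | exact ⟨r, Or.inr (Or.inr rfl), hpr.symm, hqr.symm⟩
      | exact ⟨q, Or.inr (Or.inl rfl), hpq.symm, hqr⟩
      | exact ⟨q, Or.inr (Or.inl rfl), hqr, hpq.symm⟩
      | exact ⟨r, Or.inr (Or.inr rfl), hqr.symm, hpr.symm⟩
      | exact ⟨p, Or.inl rfl, hpq, hpr⟩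
      | exact ⟨p, Or.inl rfl, hpr, hpq⟩

private lemma triple_cover {α : Type*} {a b d e f g : α}
    (hef : e ≠ f) (heg : e ≠ g) (hfg : f ≠ g)
    (he : e = a ∨ e = b ∨ e = d) (hf : f = a ∨ f = b ∨ f = d)
    (hg : g = a ∨ g = b ∨ g = d) (x : α) :
    (x = a ∨ x = b ∨ x = d) ↔ (x = e ∨ x = f ∨ x = g) := by
  rcases he with rfl | rfl | rfl <;> rcases hf with rfl | rfl | rfl <;>
    rcases hg with rfl | rfl | rfl <;> simp_all <;> tauto

private lemma range_fin3 {α : Type*} (c : Fin 3 → α) :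
    Set.range c = {c 0, c 1, c 2} := by
  ext x
  constructor
  · rintro ⟨k, rfl⟩
    fin_cases k <;> simp
  · rintro (rfl | rfl | rfl) <;> exact ⟨_, rfl⟩

lemma adj_of_mem {e f : E} {v : V} (hef : e ≠ f) (he : v ∈ G.ends e)
    (hf : v ∈ G.ends f) : (lineGraph G).Adj e f :=
  ⟨hef, ⟨v, Finset.mem_inter.2 ⟨he, hf⟩⟩⟩

lemma exists_endpoint (e : E) : ∃ v, v ∈ G.ends e := by
  have : 0 < (G.ends e).card := by rcases G.ends_card e with h | h <;> omega
  obtain ⟨v, hv⟩ := Finset.card_pos.1 this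
  exact ⟨v, hv⟩

lemma ends_eq_pair {e : E} {v w : V} (hvw : v ≠ w) (hv : v ∈ G.ends e)
    (hw : w ∈ G.ends e) : G.ends e = {v, w} := by
  have hsub : {v, w} ⊆ G.ends e := by
    intro x hx
    rcases Finset.mem_insert.1 hx with rfl | hx
    · exact hv
    · rw [Finset.mem_singleton] at hx; subst hx; exact hw
  have hcard : ({v, w} : Finset V).card = 2 := Finset.card_pair hvw
  rcases G.ends_card e with h | h
  · exact absurd (Finset.card_le_card hsub) (by omega)
  · exact (Finset.eq_of_subset_of_card_le hsub (by omega)).symm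

lemma trichotomy {c : Fin 3 → Set E} (hc : IsColoring 3 (lineGraph G) c)
    {v : V} {a b d : E} (hab : a ≠ b) (had : a ≠ d) (hbd : b ≠ d)
    (hav : v ∈ G.ends a) (hbv : v ∈ G.ends b) (hdv : v ∈ G.ends d) (i : Fin 3) :
    (a ∈ c i ∧ b ∉ c i ∧ d ∉ c i) ∨ (a ∉ c i ∧ b ∈ c i ∧ d ∉ c i) ∨
      (a ∉ c i ∧ b ∉ c i ∧ d ∈ c i) := by
  obtain ⟨ia, hia, ua⟩ := hc.1 a
  obtain ⟨ib, hib, ub⟩ := hc.1 b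
  obtain ⟨id', hid, ud⟩ := hc.1 d
  have hab' : ia ≠ ib := fun h => hc.2 ia a hia b (h ▸ hib) (adj_of_mem G hab hav hbv)
  have had' : ia ≠ id' := fun h => hc.2 ia a hia d (h ▸ hid) (adj_of_mem G had hav hdv)
  have hbd' : ib ≠ id' := fun h => hc.2 ib b hib d (h ▸ hid) (adj_of_mem G hbd hbv hdv)
  rcases fin3_cover hab' had' hbd' i with rfl | rfl | rfl
  · exact Or.inl ⟨hia, fun h => hab' (ub i h), fun h => had' (ud i h)⟩
  · exact Or.inr (Or.inl ⟨fun h => hab' (ua i h).symm, hib, fun h => hbd' (ud i h)⟩)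
  · exact Or.inr (Or.inr ⟨fun h => had' (ua i h).symm, fun h => hbd' (ub i h).symm, hid⟩)

lemma not_adj_of_mem_phi {e : E} {C D : {S : Set E // IsColorClass 3 (lineGraph G) S}}
    (hC : e ∈ C.1) (hD : e ∈ D.1)
    (h : (ColoringComplex 3 (lineGraph G)).Adj C D) : False := by
  obtain ⟨hne, c, hc, ⟨i, hi⟩, ⟨j, hj⟩⟩ := h
  obtain ⟨k, -, uk⟩ := hc.1 e
  have hik : i = k := uk i (by simp only [hi]; exact hC)
  have hjk : j = k := uk j (by simp only [hj]; exact hD)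
  exact hne (Subtype.ext (by rw [← hi, ← hj, hik, hjk]))

/-- The "vertex coloring" of the coloring complex associated with three edges. -/
def vCol (a b d : E) : Fin 3 → Set {S : Set E // IsColorClass 3 (lineGraph G) S} :=
  fun k => if k = 0 then phi 3 (lineGraph G) a else if k = 1 then phi 3 (lineGraph G) b
    else phi 3 (lineGraph G) d

lemma vCol_zero (a b d : E) : vCol G a b d 0 = phi 3 (lineGraph G) a := rfl
lemma vCol_one (a b d : E) : vCol G a b d 1 = phi 3 (lineGraph G) b := rfl
lemma vCol_two (a b d : E) : vCol G a b d 2 = phi 3 (lineGraph G) d := rfl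

lemma range_vCol (a b d : E) : Set.range (vCol G a b d) =
    {phi 3 (lineGraph G) a, phi 3 (lineGraph G) b, phi 3 (lineGraph G) d} := by
  rw [range_fin3, vCol_zero, vCol_one, vCol_two]

lemma vCol_isColoring {v : V} {a b d : E} (hab : a ≠ b) (had : a ≠ d) (hbd : b ≠ d)
    (hav : v ∈ G.ends a) (hbv : v ∈ G.ends b) (hdv : v ∈ G.ends d) :
    IsColoring 3 (ColoringComplex 3 (lineGraph G)) (vCol G a b d) := by
  have key : ∀ S : {S : Set E // IsColorClass 3 (lineGraph G) S},
      (a ∈ S.1 ∧ b ∉ S.1 ∧ d ∉ S.1) ∨ (a ∉ S.1 ∧ b ∈ S.1 ∧ d ∉ S.1) ∨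
        (a ∉ S.1 ∧ b ∉ S.1 ∧ d ∈ S.1) := by
    rintro ⟨S, cS, hcS, iS, rfl⟩
    exact trichotomy G hcS hab had hbd hav hbv hdv iS
  constructor
  · intro D
    rcases key D with ⟨h1, h2, h3⟩ | ⟨h1, h2, h3⟩ | ⟨h1, h2, h3⟩
    · refine ⟨0, h1, fun k hk => ?_⟩
      fin_cases k
      · rfl
      · exact absurd (show b ∈ D.1 from hk) h2
      · exact absurd (show d ∈ D.1 from hk) h3
    · refine ⟨1, h2, fun k hk => ?_⟩
      fin_cases k
      · exact absurd (show a ∈ D.1 from hk) h1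
      · rfl
      · exact absurd (show d ∈ D.1 from hk) h3
    · refine ⟨2, h3, fun k hk => ?_⟩
      fin_cases k
      · exact absurd (show a ∈ D.1 from hk) h1
      · exact absurd (show b ∈ D.1 from hk) h2
      · rfl
  · intro k C hC D hD hadj
    fin_cases k
    · exact not_adj_of_mem_phi G (show a ∈ C.1 from hC) (show a ∈ D.1 from hD) hadj
    · exact not_adj_of_mem_phi G (show b ∈ C.1 from hC) (show b ∈ D.1 from hD) hadj
    · exact not_adj_of_mem_phi G (show d ∈ C.1 from hC) (show d ∈ D.1 from hD) hadj

lemma phi_isClass (e : E) :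
    IsColorClass 3 (ColoringComplex 3 (lineGraph G)) (phi 3 (lineGraph G) e) := by
  obtain ⟨v, hv⟩ := exists_endpoint G e
  obtain ⟨a, b, d, hab, had, hbd, hm⟩ := G.cubic v
  have hav := (hm a).2 (Or.inl rfl)
  have hbv := (hm b).2 (Or.inr (Or.inl rfl))
  have hdv := (hm d).2 (Or.inr (Or.inr rfl))
  have hcol := vCol_isColoring G hab had hbd hav hbv hdv
  rcases (hm e).1 hv with rfl | rfl | rfl
  exacts [⟨_, hcol, 0, rfl⟩, ⟨_, hcol, 1, rfl⟩, ⟨_, hcol, 2, rfl⟩]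

lemma phi_injective (hcolorful : EdgeColorful G) :
    Function.Injective (phi 3 (lineGraph G)) := by
  intro e f h
  by_contra hne
  obtain ⟨c, hc, i, j, hij, hei, hfj⟩ := hcolorful e f hne
  have hclass : IsColorClass 3 (lineGraph G) (c i) := ⟨c, hc, i, rfl⟩
  have h1 : (⟨c i, hclass⟩ : {S : Set E // IsColorClass 3 (lineGraph G) S}) ∈
      phi 3 (lineGraph G) e := hei
  rw [h] at h1
  obtain ⟨k, -, uk⟩ := hc.1 f
  exact hij ((uk i h1).trans (uk j hfj).symm)

lemma exists_coloring_line (hcolorful : EdgeColorful G) (hV : Nonempty V) :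
    ∃ c : Fin 3 → Set E, IsColoring 3 (lineGraph G) c := by
  obtain ⟨v⟩ := hV
  obtain ⟨a, b, d, hab, -, -, -⟩ := G.cubic v
  obtain ⟨c, hc, -⟩ := hcolorful a b hab
  exact ⟨c, hc⟩

/-- The canonical vertex coloring of the coloring complex attached to a vertex. -/
def Pv (v : V) : Set (Set {S : Set E // IsColorClass 3 (lineGraph G) S}) :=
  phi 3 (lineGraph G) '' {e | v ∈ G.ends e}

lemma Pv_eq {v : V} {a b d : E}
    (hm : ∀ f : E, v ∈ G.ends f ↔ f = a ∨ f = b ∨ f = d) :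
    Pv G v = {phi 3 (lineGraph G) a, phi 3 (lineGraph G) b, phi 3 (lineGraph G) d} := by
  have h : {e | v ∈ G.ends e} = ({a, b, d} : Set E) := by
    ext x
    rw [Set.mem_setOf_eq, hm x]
    simp [Set.mem_insert_iff]
  unfold Pv
  rw [h]
  simp [Set.image_insert_eq]

lemma Pv_mem (v : V) : ∃ c, IsColoring 3 (ColoringComplex 3 (lineGraph G)) c ∧
    Pv G v = Set.range c := by
  obtain ⟨a, b, d, hab, had, hbd, hm⟩ := G.cubic v
  have hav := (hm a).2 (Or.inl rfl)
  have hbv := (hm b).2 (Or.inr (Or.inl rfl))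
  have hdv := (hm d).2 (Or.inr (Or.inr rfl))
  exact ⟨vCol G a b d, vCol_isColoring G hab had hbd hav hbv hdv,
    by rw [range_vCol, Pv_eq G hm]⟩

lemma Pv_injective (hcolorful : EdgeColorful G) : Function.Injective (Pv G) := by
  intro v w hvw
  by_contra hne
  obtain ⟨a, b, d, hab, had, hbd, hm⟩ := G.cubic v
  have hav := (hm a).2 (Or.inl rfl)
  have hbv := (hm b).2 (Or.inr (Or.inl rfl))
  have key : ∀ x, v ∈ G.ends x → w ∈ G.ends x := by
    intro x hx
    have hmem : phi 3 (lineGraph G) x ∈ Pv G v := ⟨x, hx, rfl⟩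
    rw [hvw] at hmem
    obtain ⟨y, hy, hxy⟩ := hmem
    rwa [← phi_injective G hcolorful hxy]
  have haw := key a hav
  have hbw := key b hbv
  have h1 : G.ends a = {v, w} := ends_eq_pair G hne hav haw
  have h2 : G.ends b = {v, w} := ends_eq_pair G hne hbv hbw
  exact hab (G.no_parallel a b (by rw [h1]; exact Finset.card_pair hne) (h1.trans h2.symm))

/-- Statement (iii) of the theorem. -/
def Stmt3 : Prop :=
  ∀ c : Fin 3 → Set {S : Set E // IsColorClass 3 (lineGraph G) S},
    IsColoring 3 (ColoringComplex 3 (lineGraph G)) c →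
    ∃ (v : V) (e f g : E), e ≠ f ∧ e ≠ g ∧ f ≠ g ∧
      v ∈ G.ends e ∧ v ∈ G.ends f ∧ v ∈ G.ends g ∧
      Set.range c =
        {phi 3 (lineGraph G) e, phi 3 (lineGraph G) f, phi 3 (lineGraph G) g}

/-- The injection from vertices of `G` to 3-colorings of the coloring complex. -/
noncomputable def PhiMap :
    V → {P : Set (Set {S : Set E // IsColorClass 3 (lineGraph G) S}) //
      ∃ c, IsColoring 3 (ColoringComplex 3 (lineGraph G)) c ∧ P = Set.range c} :=
  fun v => ⟨Pv G v, Pv_mem G v⟩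

lemma PhiMap_injective (hcolorful : EdgeColorful G) : Function.Injective (PhiMap G) :=
  fun _ _ h => Pv_injective G hcolorful (congrArg Subtype.val h)

lemma card_of_stmt3 [Fintype V] (hcolorful : EdgeColorful G) (h3 : Stmt3 G) :
    numColorings (ColoringComplex 3 (lineGraph G)) = Fintype.card V := by
  have hbij : Function.Bijective (PhiMap G) := by
    refine ⟨PhiMap_injective G hcolorful, ?_⟩
    rintro ⟨P, c, hc, rfl⟩
    obtain ⟨v, e, f, g, hef, heg, hfg, hve, hvf, hvg, hrange⟩ := h3 c hc
    refine ⟨v, Subtype.ext ?_⟩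
    obtain ⟨a, b, d, hab, had, hbd, hm⟩ := G.cubic v
    have hsets : {x : E | v ∈ G.ends x} = ({e, f, g} : Set E) := by
      ext x
      rw [Set.mem_setOf_eq, hm x]
      simp only [Set.mem_insert_iff, Set.mem_singleton_iff]
      exact triple_cover hef heg hfg ((hm e).1 hve) ((hm f).1 hvf) ((hm g).1 hvg) x
    show Pv G v = Set.range c
    unfold Pv
    rw [hrange, hsets]
    simp [Set.image_insert_eq]
  rw [numColorings, ← Nat.card_eq_fintype_card]
  exact (Nat.card_eq_of_bijective _ hbij).symm

lemma stmt3_of_card [Fintype V] [Fintype E] (hcolorful : EdgeColorful G)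
    (hcard : numColorings (ColoringComplex 3 (lineGraph G)) = Fintype.card V) :
    Stmt3 G := by
  classical
  have hbij : Function.Bijective (PhiMap G) := by
    rw [Nat.bijective_iff_injective_and_card]
    refine ⟨PhiMap_injective G hcolorful, ?_⟩
    rw [Nat.card_eq_fintype_card, ← hcard]
    rfl
  intro c hc
  obtain ⟨v, hv⟩ := hbij.2 ⟨Set.range c, c, hc, rfl⟩
  obtain ⟨a, b, d, hab, had, hbd, hm⟩ := G.cubic v
  have hav := (hm a).2 (Or.inl rfl)
  have hbv := (hm b).2 (Or.inr (Or.inl rfl))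
  have hdv := (hm d).2 (Or.inr (Or.inr rfl))
  have hPv : Pv G v = Set.range c := congrArg Subtype.val hv
  refine ⟨v, a, b, d, hab, had, hbd, hav, hbv, hdv, ?_⟩
  rw [← hPv, Pv_eq G hm]

lemma reflexive_of_stmt3 (hcolorful : EdgeColorful G) (h3 : Stmt3 G) :
    EdgeReflexive G := by
  have hcls : ∀ e, IsColorClass 3 (ColoringComplex 3 (lineGraph G)) (phi 3 (lineGraph G) e) :=
    phi_isClass G
  set ψ : E → {T // IsColorClass 3 (ColoringComplex 3 (lineGraph G)) T} :=
    fun e => ⟨phi 3 (lineGraph G) e, hcls e⟩ with hψ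
  have hinj : Function.Injective ψ := fun e f h =>
    phi_injective G hcolorful (congrArg Subtype.val h)
  have hsurj : Function.Surjective ψ := by
    rintro ⟨T, cT, hcT, i, hi⟩
    obtain ⟨v, e, f, g, hef, heg, hfg, hve, hvf, hvg, hrange⟩ := h3 cT hcT
    have hmem : cT i ∈ Set.range cT := ⟨i, rfl⟩
    rw [hrange] at hmem
    simp only [Set.mem_insert_iff, Set.mem_singleton_iff] at hmem
    rcases hmem with h | h | h
    · exact ⟨e, Subtype.ext (h.symm.trans hi)⟩
    · exact ⟨f, Subtype.ext (h.symm.trans hi)⟩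
    · exact ⟨g, Subtype.ext (h.symm.trans hi)⟩
  have hadj : ∀ e f : E,
      (ColoringComplex 3 (ColoringComplex 3 (lineGraph G))).Adj (ψ e) (ψ f) ↔
        (lineGraph G).Adj e f := by
    intro e f
    constructor
    · rintro ⟨hne, cB, hcB, ⟨i, hi⟩, ⟨j, hj⟩⟩
      obtain ⟨v, e1, f1, g1, h1, h2, h3', hv1, hv2, hv3, hrange⟩ := h3 cB hcB
      have hef : e ≠ f := fun h => hne (congrArg ψ h)
      have hmemv : ∀ x : E, phi 3 (lineGraph G) x ∈ Set.range cB → v ∈ G.ends x := by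
        intro x hx
        rw [hrange] at hx
        simp only [Set.mem_insert_iff, Set.mem_singleton_iff] at hx
        rcases hx with h | h | h <;> rw [phi_injective G hcolorful h] <;> assumption
      exact ⟨hef, v, Finset.mem_inter.2 ⟨hmemv e ⟨i, hi⟩, hmemv f ⟨j, hj⟩⟩⟩
    · rintro ⟨hef, hshare⟩
      obtain ⟨v, hv⟩ := hshare
      rw [Finset.mem_inter] at hv
      obtain ⟨a, b, d, hab, had, hbd, hm⟩ := G.cubic v
      have hav := (hm a).2 (Or.inl rfl)
      have hbv := (hm b).2 (Or.inr (Or.inl rfl))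
      have hdv := (hm d).2 (Or.inr (Or.inr rfl))
      have hcol := vCol_isColoring G hab had hbd hav hbv hdv
      have hkey : ∀ x : E, v ∈ G.ends x →
          ∃ k, vCol G a b d k = phi 3 (lineGraph G) x := by
        intro x hx
        rcases (hm x).1 hx with rfl | rfl | rfl
        exacts [⟨0, rfl⟩, ⟨1, rfl⟩, ⟨2, rfl⟩]
      exact ⟨fun h => hef (hinj h), vCol G a b d, hcol, hkey e hv.1, hkey f hv.2⟩
  exact ⟨⟨Equiv.ofBijective ψ ⟨hinj, hsurj⟩, fun {a b} => hadj a b⟩, fun e => rfl⟩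

lemma stmt3_of_reflexive (hcolorful : EdgeColorful G) (hV : Nonempty V)
    (hrefl : EdgeReflexive G) : Stmt3 G := by
  obtain ⟨F, hF⟩ := hrefl
  intro c hc
  have hcl : ∀ i, IsColorClass 3 (ColoringComplex 3 (lineGraph G)) (c i) :=
    fun i => ⟨c, hc, i, rfl⟩
  obtain ⟨e0, he0⟩ := F.surjective ⟨c 0, hcl 0⟩
  obtain ⟨e1, he1⟩ := F.surjective ⟨c 1, hcl 1⟩
  obtain ⟨e2, he2⟩ := F.surjective ⟨c 2, hcl 2⟩
  have hphi0 : phi 3 (lineGraph G) e0 = c 0 :=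
    (hF e0).symm.trans (congrArg Subtype.val he0)
  have hphi1 : phi 3 (lineGraph G) e1 = c 1 :=
    (hF e1).symm.trans (congrArg Subtype.val he1)
  have hphi2 : phi 3 (lineGraph G) e2 = c 2 :=
    (hF e2).symm.trans (congrArg Subtype.val he2)
  -- the coloring complex has an edge
  obtain ⟨cX, hcX⟩ := exists_coloring_line G hcolorful hV
  obtain ⟨v0⟩ := hV
  obtain ⟨a0, b0, d0, hab0, had0, hbd0, hm0⟩ := G.cubic v0
  have hav0 := (hm0 a0).2 (Or.inl rfl)
  have hbv0 := (hm0 b0).2 (Or.inr (Or.inl rfl))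
  have hdv0 := (hm0 d0).2 (Or.inr (Or.inr rfl))
  have hx0 : ∃ x, x ∈ cX 0 := by
    rcases trichotomy G hcX hab0 had0 hbd0 hav0 hbv0 hdv0 (0 : Fin 3) with
      ⟨h, -, -⟩ | ⟨-, h, -⟩ | ⟨-, -, h⟩
    exacts [⟨a0, h⟩, ⟨b0, h⟩, ⟨d0, h⟩]
  obtain ⟨x0, hx0⟩ := hx0
  have hne01X : cX 0 ≠ cX 1 := by
    intro h
    obtain ⟨k, -, uk⟩ := hcX.1 x0
    have h0 : (0 : Fin 3) = k := uk 0 hx0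
    have h1 : (1 : Fin 3) = k := uk 1 (by simp only [← h]; exact hx0)
    exact absurd (h0.trans h1.symm) (by decide)
  have hadjB : (ColoringComplex 3 (lineGraph G)).Adj ⟨cX 0, ⟨cX, hcX, 0, rfl⟩⟩
      ⟨cX 1, ⟨cX, hcX, 1, rfl⟩⟩ :=
    ⟨fun h => hne01X (congrArg Subtype.val h), cX, hcX, ⟨0, rfl⟩, ⟨1, rfl⟩⟩
  -- classes of `c` are pairwise distinct
  have hcd : ∀ i j : Fin 3, i ≠ j → c i ≠ c j := by
    intro i j hij hcij
    by_cases hnonempty : (c i).Nonempty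
    · obtain ⟨D, hD⟩ := hnonempty
      obtain ⟨k, -, uk⟩ := hc.1 D
      exact hij ((uk i hD).trans (uk j (by simp only [← hcij]; exact hD)).symm)
    · have hempty : c i = ∅ := Set.not_nonempty_iff_eq_empty.1 hnonempty
      have hempty' : c j = ∅ := hcij ▸ hempty
      obtain ⟨k0, hk0, -⟩ := hc.1 ⟨cX 0, ⟨cX, hcX, 0, rfl⟩⟩
      obtain ⟨k1, hk1, -⟩ := hc.1 ⟨cX 1, ⟨cX, hcX, 1, rfl⟩⟩
      have h0i : k0 ≠ i := fun h => Set.notMem_empty _ (hempty ▸ h ▸ hk0)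
      have h0j : k0 ≠ j := fun h => Set.notMem_empty _ (hempty' ▸ h ▸ hk0)
      have h1i : k1 ≠ i := fun h => Set.notMem_empty _ (hempty ▸ h ▸ hk1)
      have h1j : k1 ≠ j := fun h => Set.notMem_empty _ (hempty' ▸ h ▸ hk1)
      have hk01 : k0 = k1 := fin3_eq hij h0i h0j h1i h1j
      exact hc.2 k0 _ hk0 _ (hk01 ▸ hk1) hadjB
  have hne01 : e0 ≠ e1 := fun h =>
    hcd 0 1 (by decide) (by rw [← hphi0, ← hphi1, h])
  have hne02 : e0 ≠ e2 := fun h =>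
    hcd 0 2 (by decide) (by rw [← hphi0, ← hphi2, h])
  have hne12 : e1 ≠ e2 := fun h =>
    hcd 1 2 (by decide) (by rw [← hphi1, ← hphi2, h])
  -- the three edges are pairwise adjacent in the line graph
  have hadjX : ∀ (i j : Fin 3) (x y : E), i ≠ j →
      F x = ⟨c i, hcl i⟩ → F y = ⟨c j, hcl j⟩ → (lineGraph G).Adj x y := by
    intro i j x y hij hx hy
    have hB : (ColoringComplex 3 (ColoringComplex 3 (lineGraph G))).Adj
        ⟨c i, hcl i⟩ ⟨c j, hcl j⟩ :=
      ⟨fun h => hcd i j hij (congrArg Subtype.val h), c, hc, ⟨i, rfl⟩, ⟨j, rfl⟩⟩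
    rw [← hx, ← hy] at hB
    exact F.map_rel_iff.1 hB
  have hA01 : (lineGraph G).Adj e0 e1 := hadjX 0 1 e0 e1 (by decide) he0 he1
  have hA02 : (lineGraph G).Adj e0 e2 := hadjX 0 2 e0 e2 (by decide) he0 he2
  have hA12 : (lineGraph G).Adj e1 e2 := hadjX 1 2 e1 e2 (by decide) he1 he2
  obtain ⟨a, ha⟩ := hA01.2
  obtain ⟨b, hb⟩ := hA02.2
  obtain ⟨d, hd⟩ := hA12.2
  rw [Finset.mem_inter] at ha hb hd
  -- the three edges share a common vertex
  have hcommon : ∃ v, v ∈ G.ends e0 ∧ v ∈ G.ends e1 ∧ v ∈ G.ends e2 := by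
    by_cases hab : a = b
    · exact ⟨a, ha.1, ha.2, hab ▸ hb.2⟩
    by_cases had : a = d
    · exact ⟨a, ha.1, ha.2, had ▸ hd.2⟩
    by_cases hbd : b = d
    · exact ⟨b, hb.1, hbd ▸ hd.1, hb.2⟩
    -- triangle case: contradiction with edge-colorfulness
    exfalso
    have hE2 : G.ends e2 = {b, d} := ends_eq_pair G hbd hb.2 hd.2
    obtain ⟨p, q, r, hpq, hpr, hqr, hm⟩ := G.cubic a
    have h0m : e0 = p ∨ e0 = q ∨ e0 = r := (hm e0).1 ha.1
    have h1m : e1 = p ∨ e1 = q ∨ e1 = r := (hm e1).1 ha.2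
    obtain ⟨h, hmemh, hh0, hh1⟩ := third_exists hpq hpr hqr h0m h1m hne01
    have hah : a ∈ G.ends h := (hm h).2 hmemh
    have hh2 : h ≠ e2 := by
      intro hcon
      rw [hcon, hE2, Finset.mem_insert, Finset.mem_singleton] at hah
      rcases hah with h' | h'
      exacts [hab h', had h']
    obtain ⟨c', hc', i, j, hij, hhi, he2j⟩ := hcolorful h e2 hh2
    obtain ⟨p0, hp0, u0⟩ := hc'.1 e0
    obtain ⟨p1, hp1, u1⟩ := hc'.1 e1
    obtain ⟨p2, hp2, u2⟩ := hc'.1 e2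
    have h01 : p0 ≠ p1 := fun hcon => hc'.2 p0 e0 hp0 e1 (hcon ▸ hp1) hA01
    have h02 : p0 ≠ p2 := fun hcon => hc'.2 p0 e0 hp0 e2 (hcon ▸ hp2) hA02
    have h12 : p1 ≠ p2 := fun hcon => hc'.2 p1 e1 hp1 e2 (hcon ▸ hp2) hA12
    have hi0 : i ≠ p0 := fun hcon =>
      hc'.2 i h hhi e0 (by rw [hcon]; exact hp0) (adj_of_mem G hh0 hah ha.1)
    have hi1 : i ≠ p1 := fun hcon =>
      hc'.2 i h hhi e1 (by rw [hcon]; exact hp1) (adj_of_mem G hh1 hah ha.2)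
    have hj2 : j = p2 := u2 j he2j
    have hi2 : i = p2 := by
      rcases fin3_cover h01 h02 h12 i with rfl | rfl | rfl
      · exact absurd rfl hi0
      · exact absurd rfl hi1
      · rfl
    exact hij (hi2.trans hj2.symm)
  obtain ⟨v, hv0, hv1, hv2⟩ := hcommon
  refine ⟨v, e0, e1, e2, hne01, hne02, hne12, hv0, hv1, hv2, ?_⟩
  rw [range_fin3, hphi0, hphi1, hphi2]

end EdgeReflexiveProof

/-- For a cubic edge-colorful graph `G` of order `n` with `X = L(G)`, the
following are equivalent: (i) `G` is edge-reflexive; (ii) `B(X)` has exactly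
`n` 3-colorings; (iii) every 3-coloring of `B(X)` has the form
`{φ_X(e), φ_X(f), φ_X(g)}` for the three edges `e`, `f`, `g` incident with
some vertex of `G`. -/
theorem edgeReflexive_iff_count {V E : Type*} [DecidableEq V] [Fintype V] [Fintype E]
    (G : CubicGraph V E) (n : ℕ) (hn : Fintype.card V = n)
    (hcolorful : EdgeColorful G) :
    (EdgeReflexive G ↔ numColorings (ColoringComplex 3 (lineGraph G)) = n) ∧
    (numColorings (ColoringComplex 3 (lineGraph G)) = n ↔
      ∀ c : Fin 3 → Set {S : Set E // IsColorClass 3 (lineGraph G) S},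
        IsColoring 3 (ColoringComplex 3 (lineGraph G)) c →
        ∃ (v : V) (e f g : E), e ≠ f ∧ e ≠ g ∧ f ≠ g ∧
          v ∈ G.ends e ∧ v ∈ G.ends f ∧ v ∈ G.ends g ∧
          Set.range c =
            {phi 3 (lineGraph G) e, phi 3 (lineGraph G) f, phi 3 (lineGraph G) g}) := by
  classical
  rcases isEmpty_or_nonempty V with hV | hV
  · -- degenerate case: no vertices, hence no edges
    have hE : IsEmpty E := ⟨fun e => by
      obtain ⟨v, -⟩ := exists_endpoint G e; exact hV.false v⟩
    have hn0 : n = 0 := by rw [← hn]; exact Fintype.card_eq_zero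
    set cB : Fin 3 → Set {S : Set E // IsColorClass 3 (lineGraph G) S} :=
      fun k => if k = 0 then Set.univ else ∅ with hcB_def
    have hcB : IsColoring 3 (ColoringComplex 3 (lineGraph G)) cB := by
      constructor
      · intro D
        refine ⟨0, by simp [cB], fun k hk => ?_⟩
        by_contra hk0
        simp [cB, hk0] at hk
      · intro k u hu w hw hadj
        exact hadj.1 (Subtype.ext (by ext x; exact (hE.false x).elim))
    have hcount : ¬ numColorings (ColoringComplex 3 (lineGraph G)) = n := by
      rw [hn0]
      haveI : Nonempty {P : Set (Set {S : Set E // IsColorClass 3 (lineGraph G) S}) //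
          ∃ c, IsColoring 3 (ColoringComplex 3 (lineGraph G)) c ∧ P = Set.range c} :=
        ⟨⟨Set.range cB, cB, hcB, rfl⟩⟩
      rw [numColorings]
      exact Nat.card_pos.ne'
    have hnotrefl : ¬ EdgeReflexive G := by
      rintro ⟨F, -⟩
      have hclass : IsColorClass 3 (ColoringComplex 3 (lineGraph G)) Set.univ :=
        ⟨cB, hcB, 0, by simp [cB]⟩
      exact hE.false (F.symm ⟨Set.univ, hclass⟩)
    have hnot3 : ¬ Stmt3 G := by
      intro h
      obtain ⟨v, -⟩ := h cB hcB
      exact hV.false v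
    exact ⟨iff_of_false hnotrefl hcount, iff_of_false hcount hnot3⟩
  · have h23 : numColorings (ColoringComplex 3 (lineGraph G)) = n ↔ Stmt3 G := by
      constructor
      · intro hcard
        exact stmt3_of_card G hcolorful (by rw [hcard, hn])
      · intro h3
        rw [card_of_stmt3 G hcolorful h3, hn]
    have h13 : EdgeReflexive G ↔ Stmt3 G :=
      ⟨stmt3_of_reflexive G hcolorful hV, reflexive_of_stmt3 G hcolorful⟩
    exact ⟨h13.trans h23.symm, h23⟩
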